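/- Let p be a prime, let r, m, e be positive integers with e ≥ 2, and let (a_1,…,a_m) be an m-tuple of natural numbers with a_1+⋯+a_m = r(p^e−1). Then the following are equivalent: (i) there exist an integer e' with 1 ≤ e' ≤ e−1 and m-tuples of natural numbers (a'_1,…,a'_m) and (a''_1,…,a''_m) such that a_j = a'_j + p^{e'}·a''_j for every j, a'_1+⋯+a'_m = r(p^{e'}−1), and a''_1+⋯+a''_m = r(p^{e−e'}−1); (ii) there exists an integer e' with 1 ≤ e' ≤ e−1 such that (a_1 mod p^{e'}) + ⋯ + (a_m mod p^{e'}) ≤ r(p^{e'}−1). -/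

import Mathlib

/-- Auxiliary: any `k ≤ ∑ b j` is achieved by a pointwise-dominated tuple. -/
lemma aux_exists_pointwise {m : ℕ} (b : Fin m → ℕ) (k : ℕ) (hk : k ≤ ∑ j, b j) :
    ∃ t : Fin m → ℕ, (∀ j, t j ≤ b j) ∧ ∑ j, t j = k := by
  induction k with
  | zero => exact ⟨0, fun j => Nat.zero_le _, by simp⟩
  | succ k ih =>
    obtain ⟨t, ht, hsum⟩ := ih (le_of_lt (Nat.lt_of_succ_le hk))
    have hex : ∃ j, t j < b j := by
      by_contra h
      push_neg at h
      have : ∑ j, b j ≤ ∑ j, t j := Finset.sum_le_sum fun j _ => h j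
      omega
    obtain ⟨j0, hj0⟩ := hex
    refine ⟨Function.update t j0 (t j0 + 1), fun j => ?_, ?_⟩
    · rcases eq_or_ne j j0 with rfl | h
      · simpa using hj0
      · simpa [Function.update_of_ne h] using ht j
    · have hupd : ∀ j, Function.update t j0 (t j0 + 1) j
          = t j + if j = j0 then 1 else 0 := by
        intro j
        rcases eq_or_ne j j0 with rfl | h
        · simp
        · simp [Function.update_of_ne h, h]
      rw [Finset.sum_congr rfl fun j _ => hupd j, Finset.sum_add_distrib, hsum]
      simp

/-- factorization of a monomial of degree `r(p^e-1)` in the twisted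
ring `T(V_r(R[x_1,…,x_m]))` is equivalent to a truncation inequality. -/
theorem stmt_0 (p r m e : ℕ) (hp : p.Prime) (hr : 0 < r) (hm : 0 < m)
    (he : 2 ≤ e) (a : Fin m → ℕ) (ha : ∑ j, a j = r * (p ^ e - 1)) :
    (∃ e' : ℕ, 1 ≤ e' ∧ e' ≤ e - 1 ∧ ∃ a' a'' : Fin m → ℕ,
        (∀ j, a j = a' j + p ^ e' * a'' j) ∧
        (∑ j, a' j = r * (p ^ e' - 1)) ∧
        (∑ j, a'' j = r * (p ^ (e - e') - 1))) ↔
    (∃ e' : ℕ, 1 ≤ e' ∧ e' ≤ e - 1 ∧ (∑ j, a j % p ^ e') ≤ r * (p ^ e' - 1)) := by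
  constructor
  · rintro ⟨e', h1, h2, a', a'', heq, hs', hs''⟩
    refine ⟨e', h1, h2, ?_⟩
    calc ∑ j, a j % p ^ e' ≤ ∑ j, a' j := by
          refine Finset.sum_le_sum fun j _ => ?_
          rw [heq j, Nat.add_mul_mod_self_left]
          exact Nat.mod_le _ _
      _ = r * (p ^ e' - 1) := hs'
  · rintro ⟨e', h1, h2, hle⟩
    set q := p ^ e' with hqdef
    have hq1 : 1 ≤ q := Nat.one_le_pow _ _ hp.pos
    set x := p ^ (e - e') with hxdef
    have hx1 : 1 ≤ x := Nat.one_le_pow _ _ hp.pos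
    have hqx : q * x = p ^ e := by rw [hqdef, hxdef, ← pow_add]; congr 1; omega
    set R := r * (x - 1) with hRdef
    set s := ∑ j, a j % q with hsdef
    set T := ∑ j, a j / q with hTdef
    -- key identity: r*(p^e-1) = r*(q-1) + q*R
    have hid : r * (p ^ e - 1) = r * (q - 1) + q * R := by
      rw [← hqx, hRdef]
      have hqx1 : 1 ≤ q * x := Nat.one_le_iff_ne_zero.mpr (by positivity)
      zify [hq1, hx1, hqx1]
      ring
    have hsT : s + q * T = r * (p ^ e - 1) := by
      rw [← ha, hsdef, hTdef, Finset.mul_sum, ← Finset.sum_add_distrib]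
      exact Finset.sum_congr rfl fun j _ => Nat.mod_add_div (a j)  q
    have hkey : s + q * T = r * (q - 1) + q * R := by rw [hsT, hid]
    have hTR : R ≤ T := by
      by_contra h
      push_neg at h
      have : q * T < q * R := (Nat.mul_lt_mul_left (by omega)).mpr h
      omega
    set k := T - R with hkdef
    have hqk : q * k = r * (q - 1) - s := by
      have h1 : q * k = q * T - q * R := by rw [hkdef, Nat.mul_sub]
      omega
    have hkT : k ≤ ∑ j, a j / q := by
      calc k = T - R := hkdef
        _ ≤ T := Nat.sub_le _ _
        _ = ∑ j, a j / q := hTdef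
    obtain ⟨t, ht, htsum⟩ := aux_exists_pointwise (fun j => a j / q) k hkT
    refine ⟨e', h1, h2, (fun j => a j % q + q * t j), (fun j => a j / q - t j),
      fun j => ?_, ?_, ?_⟩
    · rw [← hqdef]
      have hmd : a j % q + q * (a j / q) = a j := Nat.mod_add_div (a j) q
      have hms : q * (a j / q - t j) = q * (a j / q) - q * t j := Nat.mul_sub _ _ _
      have hle' : q * t j ≤ q * (a j / q) := Nat.mul_le_mul_left _ (ht j)
      simp only []
      omega
    · rw [← hqdef, Finset.sum_add_distrib, ← Finset.mul_sum, htsum, ← hsdef]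
      omega
    · show ∑ j, (a j / q - t j) = r * (p ^ (e - e') - 1)
      rw [← hxdef, ← hRdef]
      have hTsum : ∑ j, (a j / q - t j) + ∑ j, t j = T := by
        rw [← Finset.sum_add_distrib, hTdef]
        exact Finset.sum_congr rfl fun j _ => by have : t j ≤ a j / q := ht j; omega
      rw [htsum] at hTsum
      omega
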